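/- Let g = [[u, v], [conj(v), conj(u)]] ∈ SU(1,1) (so |u|² − |v|² = 1) and let λ > 0 be real. Then the matrix exp(diag(λ, −λ))·g = [[e^λ·u, e^λ·v], [e^{−λ}·conj(v), e^{−λ}·conj(u)]] is an admissible element of SL(2,ℂ): it can be written as h·b with h ∈ SU(1,1) and b an admissible element of AN. -/

import Mathlib

open Matrix Complex

noncomputable section

/-- J = diag(1, −1). -/
def J2 : Matrix (Fin 2) (Fin 2) ℂ := !![1, 0; 0, -1]

/-- SU(1,1): determinant one matrices with g* J g = J. -/
def SU11 : Set (Matrix (Fin 2) (Fin 2) ℂ) :=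
  {g | g.det = 1 ∧ gᴴ * J2 * g = J2}

/-- M† = J M* J. -/
def dag2 (M : Matrix (Fin 2) (Fin 2) ℂ) : Matrix (Fin 2) (Fin 2) ℂ :=
  J2 * Mᴴ * J2

/-- AN ⊂ SL(2,ℂ): upper triangular, determinant one, positive real diagonal. -/
def AN2 : Set (Matrix (Fin 2) (Fin 2) ℂ) :=
  {b | b.det = 1 ∧ b 1 0 = 0 ∧
    (0 < (b 0 0).re ∧ (b 0 0).im = 0) ∧ (0 < (b 1 1).re ∧ (b 1 1).im = 0)}

/-- Admissible elements of Q for SU(1,1): conjugates g⁻¹ diag(e^μ, e^{-μ}) g, μ > 0,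
of exponentials of admissible traceless diagonals diag(μ, -μ). -/
def IsAdmissibleQ2 (s : Matrix (Fin 2) (Fin 2) ℂ) : Prop :=
  ∃ g ∈ SU11, ∃ lam mu : ℝ, mu < lam ∧ lam + mu = 0 ∧
    s = g⁻¹ * !![(Real.exp lam : ℂ), 0; 0, (Real.exp mu : ℂ)] * g

/-- Admissible elements of AN for SU(1,1). -/
def IsAdmissibleAN2 (b : Matrix (Fin 2) (Fin 2) ℂ) : Prop :=
  b ∈ AN2 ∧ IsAdmissibleQ2 (dag2 b * b)

/-- conjTranspose of an explicit 2×2 complex matrix. -/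
lemma ct2 (a b c d : ℂ) :
    (!![a, b; c, d])ᴴ
      = !![(starRingEnd ℂ) a, (starRingEnd ℂ) c; (starRingEnd ℂ) b, (starRingEnd ℂ) d] := by
  ext i j; fin_cases i <;> fin_cases j <;> rfl

/-- entrywise constructor for equality of explicit 2×2 matrices. -/
lemma ext2 {a b c d x y z w : ℂ} (h1 : a = x) (h2 : b = y) (h3 : c = z) (h4 : d = w) :
    !![a, b; c, d] = !![x, y; z, w] := by
  ext i j
  fin_cases i <;> fin_cases j <;> simp only [Matrix.cons_val', Matrix.cons_val_zero,
    Matrix.cons_val_one, Matrix.head_cons, Matrix.head_fin_const, Matrix.empty_val',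
    Matrix.cons_val_fin_one, Fin.mk_zero, Fin.mk_one, Fin.isValue] <;> assumption

lemma J2_eq : J2 = !![1, 0; 0, -1] := rfl


set_option maxHeartbeats 1000000 in
/-- for g = [[u,v],[conj v, conj u]] ∈ SU(1,1) and λ > 0, the matrix
exp(diag(λ,−λ))·g is an admissible element of SL(2,ℂ). -/
theorem su11_admissible_orbit
    (u v : ℂ) (hg : Complex.normSq u - Complex.normSq v = 1)
    (lam : ℝ) (hlam : 0 < lam)
    (M : Matrix (Fin 2) (Fin 2) ℂ)
    (hM : M = !![(Real.exp lam : ℂ) * u, (Real.exp lam : ℂ) * v;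
                 (Real.exp (-lam) : ℂ) * (starRingEnd ℂ) v,
                 (Real.exp (-lam) : ℂ) * (starRingEnd ℂ) u]) :
    ∃ h ∈ SU11, ∃ b, IsAdmissibleAN2 b ∧ M = h * b := by
  have he1 : 1 < Real.exp lam := Real.one_lt_exp_iff.2 hlam
  have hf1 : Real.exp (-lam) < 1 := Real.exp_lt_one_iff.2 (by linarith)
  have hfpos : 0 < Real.exp (-lam) := Real.exp_pos _
  set e := Real.exp lam with he
  set f := Real.exp (-lam) with hf
  have hef : e * f = 1 := by rw [he, hf, ← Real.exp_add]; simp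
  have hnv : 0 ≤ Complex.normSq v := Complex.normSq_nonneg v
  have h2 : f ^ 2 < e ^ 2 := by nlinarith
  have hcpos : 0 < e ^ 2 + (e ^ 2 - f ^ 2) * Complex.normSq v := by
    nlinarith [mul_nonneg (le_of_lt (sub_pos.2 h2)) hnv]
  set c := e ^ 2 + (e ^ 2 - f ^ 2) * Complex.normSq v with hc
  set p := Real.sqrt c with hpdef
  have hppos : 0 < p := Real.sqrt_pos.2 hcpos
  have hpp : p * p = c := Real.mul_self_sqrt hcpos.le
  -- complex versions
  have hP0 : (p : ℂ) ≠ 0 := Complex.ofReal_ne_zero.2 hppos.ne'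
  have hEF : (e : ℂ) * (f : ℂ) = 1 := by exact_mod_cast congrArg Complex.ofReal hef
  have huu : u * (starRingEnd ℂ) u = v * (starRingEnd ℂ) v + 1 := by
    have := congrArg Complex.ofReal hg
    push_cast at this
    rw [← Complex.mul_conj, ← Complex.mul_conj] at this
    linear_combination this
  have hPP : (p : ℂ) * (p : ℂ)
      = (e : ℂ) ^ 2 + ((e : ℂ) ^ 2 - (f : ℂ) ^ 2) * (v * (starRingEnd ℂ) v) := by
    have h1 := congrArg Complex.ofReal hpp
    rw [hc] at h1
    push_cast at h1
    rw [← Complex.mul_conj] at h1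
    exact h1
  set q : ℂ := ((e : ℂ) ^ 2 - (f : ℂ) ^ 2) * (v * (starRingEnd ℂ) u) / (p : ℂ) with hq
  have hcq : (starRingEnd ℂ) q
      = ((e : ℂ) ^ 2 - (f : ℂ) ^ 2) * ((starRingEnd ℂ) v * u) / (p : ℂ) := by
    simp only [hq, map_div₀, _root_.map_mul, map_sub, map_pow, Complex.conj_ofReal,
      Complex.conj_conj]
  -- the crucial scalar identity for the (1,1) entries
  have h11 : (starRingEnd ℂ) q * q - ((p : ℂ))⁻¹ * ((p : ℂ))⁻¹
      = (e : ℂ) ^ 2 * (v * (starRingEnd ℂ) v) - (f : ℂ) ^ 2 * (u * (starRingEnd ℂ) u) := by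
    rw [hcq, hq]
    field_simp
    linear_combination ((e : ℂ) ^ 4 * (v * (starRingEnd ℂ) v) + (e : ℂ) ^ 2 * (f : ℂ) ^ 2
        - (e : ℂ) ^ 2 * (f : ℂ) ^ 2 * (v * (starRingEnd ℂ) v)) * huu
      + ((e : ℂ) * (f : ℂ) + 1) * hEF
      - ((e : ℂ) ^ 2 * (v * (starRingEnd ℂ) v) - (f : ℂ) ^ 2 * (u * (starRingEnd ℂ) u)) * hPP
  set b : Matrix (Fin 2) (Fin 2) ℂ := !![(p : ℂ), q; 0, (p : ℂ)⁻¹] with hb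
  set bi : Matrix (Fin 2) (Fin 2) ℂ := !![(p : ℂ)⁻¹, -q; 0, (p : ℂ)] with hbi
  have hbbi : b * bi = 1 := by
    rw [hb, hbi, Matrix.mul_fin_two]
    ext i j
    fin_cases i <;> fin_cases j <;>
      simp [mul_inv_cancel₀ hP0, inv_mul_cancel₀ hP0, mul_comm]
  have hbib : bi * b = 1 := by
    rw [hb, hbi, Matrix.mul_fin_two]
    ext i j
    fin_cases i <;> fin_cases j <;>
      simp [mul_inv_cancel₀ hP0, inv_mul_cancel₀ hP0, mul_comm]
  -- the key quadratic identity : Mᴴ J M = bᴴ J b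
  have key : Mᴴ * J2 * M = bᴴ * J2 * b := by
    rw [hM, hb, J2_eq, ct2, ct2, Matrix.mul_fin_two, Matrix.mul_fin_two,
      Matrix.mul_fin_two, Matrix.mul_fin_two]
    refine ext2 ?_ ?_ ?_ ?_ <;>
      simp only [_root_.map_mul, Complex.conj_ofReal, Complex.conj_conj, 
        _root_.map_zero, _root_.map_one, mul_zero, zero_mul, mul_one, one_mul, add_zero, zero_add,
        mul_neg, neg_mul, map_inv₀]
    · -- (0,0)
      linear_combination (e : ℂ) ^ 2 * huu - hPP
    · -- (0,1)
      rw [hq]; field_simp; ring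
    · -- (1,0)
      rw [hcq]; field_simp; ring
    · -- (1,1)
      linear_combination - h11
  have detM : M.det = 1 := by
    rw [hM, Matrix.det_fin_two_of]
    linear_combination ((e : ℂ) * (f : ℂ)) * huu + hEF
  have detb : b.det = 1 := by
    rw [hb, Matrix.det_fin_two_of]
    field_simp
    simp
  have detbi : bi.det = 1 := by
    rw [hbi, Matrix.det_fin_two_of]
    field_simp
    simp
  refine ⟨M * bi, ⟨?_, ?_⟩, b, ⟨?_, ?_⟩, ?_⟩
  · rw [Matrix.det_mul, detM, detbi, one_mul]
  · calc (M * bi)ᴴ * J2 * (M * bi) = biᴴ * (Mᴴ * J2 * M) * bi := by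
          rw [Matrix.conjTranspose_mul]; simp only [Matrix.mul_assoc]
      _ = biᴴ * (bᴴ * J2 * b) * bi := by rw [key]
      _ = (b * bi)ᴴ * J2 * (b * bi) := by
          rw [Matrix.conjTranspose_mul]; simp only [Matrix.mul_assoc]
      _ = J2 := by rw [hbbi]; simp
  · -- b ∈ AN2
    refine ⟨detb, ?_, ⟨?_, ?_⟩, ⟨?_, ?_⟩⟩ <;> rw [hb]
    · rfl
    · show (0 : ℝ) < ((p : ℂ)).re; simpa using hppos
    · show ((p : ℂ)).im = 0; simp
    · show (0 : ℝ) < ((p : ℂ)⁻¹).re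
      rw [← Complex.ofReal_inv]; simpa using inv_pos.2 hppos
    · show ((p : ℂ)⁻¹).im = 0
      rw [← Complex.ofReal_inv]; simp
  · -- IsAdmissibleQ2 (dag2 b * b)
    set g : Matrix (Fin 2) (Fin 2) ℂ := !![u, v; (starRingEnd ℂ) v, (starRingEnd ℂ) u] with hgm
    set gi : Matrix (Fin 2) (Fin 2) ℂ :=
      !![(starRingEnd ℂ) u, -v; -((starRingEnd ℂ) v), u] with hgim
    have hone : (1 : Matrix (Fin 2) (Fin 2) ℂ) = !![1, 0; 0, 1] := by
      ext i j; fin_cases i <;> fin_cases j <;> simp [Matrix.one_apply]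
    have hgig : gi * g = 1 := by
      rw [hgm, hgim, Matrix.mul_fin_two, hone]
      refine ext2 ?_ ?_ ?_ ?_
      · linear_combination huu
      · ring
      · ring
      · linear_combination huu
    have hginv : g⁻¹ = gi := Matrix.inv_eq_left_inv hgig
    have hE2C : (Real.exp (2 * lam) : ℂ) = (e : ℂ) ^ 2 := by
      rw [two_mul, Real.exp_add, ← he]; push_cast; ring
    have hF2C : (Real.exp (-(2 * lam)) : ℂ) = (f : ℂ) ^ 2 := by
      rw [show -(2 * lam) = -lam + -lam by ring, Real.exp_add, ← hf]; push_cast; ring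
    refine ⟨g, ⟨?_, ?_⟩, 2 * lam, -(2 * lam), by linarith, by ring, ?_⟩
    · rw [hgm, Matrix.det_fin_two_of]
      linear_combination huu
    · rw [hgm, J2_eq, ct2, Matrix.mul_fin_two, Matrix.mul_fin_two]
      refine ext2 ?_ ?_ ?_ ?_ <;>
        simp only [_root_.map_mul, Complex.conj_ofReal, Complex.conj_conj,
          _root_.map_zero, _root_.map_one, mul_zero, zero_mul, mul_one, one_mul,
          add_zero, zero_add, mul_neg, neg_mul]
      · linear_combination huu
      · ring
      · ring
      · linear_combination - huu
    · rw [hginv, hE2C, hF2C, dag2, hb, hgim, hgm, J2_eq, ct2, Matrix.mul_fin_two,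
        Matrix.mul_fin_two, Matrix.mul_fin_two, Matrix.mul_fin_two, Matrix.mul_fin_two]
      refine ext2 ?_ ?_ ?_ ?_ <;>
        simp only [_root_.map_mul, Complex.conj_ofReal, Complex.conj_conj,
          _root_.map_zero, _root_.map_one, map_inv₀, mul_zero, zero_mul, mul_one, one_mul,
          add_zero, zero_add, mul_neg, neg_mul, neg_zero, neg_neg]
      · linear_combination hPP - (e : ℂ) ^ 2 * huu
      · rw [hq]; field_simp; ring
      · rw [hcq]; field_simp; ring
      · linear_combination - h11
  · rw [Matrix.mul_assoc, hbib, Matrix.mul_one]
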